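/- Let x₀, φ, t₀, ρ be as in the context, let α ∈ Sⁿ, and let r_α be any element of G preserving ℝ^{n+1}×{0} with r_α(α,1) = e₁. If there exist infinitely many pairs (p,q) ∈ ℤ^{n+1} × ℕ with q ≥ x₀, p/q ∈ Sⁿ, and ‖α − p/q‖ < φ(q), then there exists a sequence t_k → ∞ in [t₀,∞) such that ω(g_{t_k} r_α Λ₀) < 2ρ(t_k). -/

import Mathlib

open MeasureTheory

/-- The unit Euclidean sphere `Sⁿ` in `ℝ^{n+1}` (the ambient space `Fin (n+1) → ℝ`
carries the supremum norm). -/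
noncomputable def unitSphere (n : ℕ) : Set (Fin (n + 1) → ℝ) :=
  {x | ∑ i, x i ^ 2 = 1}

/-- The rational point `p/q` in `ℝ^{n+1}`. -/
noncomputable def ratPt (n : ℕ) (p : Fin (n + 1) → ℤ) (q : ℕ) : Fin (n + 1) → ℝ :=
  fun i => (p i : ℝ) / (q : ℝ)

/-- The quadratic form `Q(x) = x₁² + ⋯ + x_{n+1}² − x_{n+2}²` on `ℝ^{n+2}`. -/
noncomputable def Qform (n : ℕ) (x : Fin (n + 2) → ℝ) : ℝ :=
  (∑ i : Fin (n + 1), x i.castSucc ^ 2) - x (Fin.last (n + 1)) ^ 2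

/-- `Λ₀ = ℤ^{n+2} ∩ L`, the integer points of the light cone `L = {Q = 0}`. -/
noncomputable def Lambda0 (n : ℕ) : Set (Fin (n + 2) → ℝ) :=
  {v | (∀ i, ∃ m : ℤ, v i = (m : ℝ)) ∧ Qform n v = 0}

/-- Membership in `G = SO(Q)`: determinant one and preservation of `Q`. -/
def isSOQ (n : ℕ) (g : Matrix (Fin (n + 2)) (Fin (n + 2)) ℝ) : Prop :=
  g.det = 1 ∧ ∀ x, Qform n (g.mulVec x) = Qform n x

/-- The one-parameter diagonal flow `g_t`. -/
noncomputable def gFlow (n : ℕ) (t : ℝ) : Matrix (Fin (n + 2)) (Fin (n + 2)) ℝ :=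
  Matrix.of fun i j =>
    if i = 0 ∧ j = 0 then Real.cosh t
    else if i = 0 ∧ j = Fin.last (n + 1) then -Real.sinh t
    else if i = Fin.last (n + 1) ∧ j = 0 then -Real.sinh t
    else if i = Fin.last (n + 1) ∧ j = Fin.last (n + 1) then Real.cosh t
    else if i = j then 1 else 0

/-- The vector `e₁ = (1,0,…,0,1) ∈ L`. -/
noncomputable def eOne (n : ℕ) : Fin (n + 2) → ℝ :=
  fun i => if i = 0 then 1 else if i = Fin.last (n + 1) then 1 else 0

/-- The embedding `α ↦ (α,1)` of `Sⁿ` into the light cone. -/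
noncomputable def embedS (n : ℕ) (α : Fin (n + 1) → ℝ) : Fin (n + 2) → ℝ :=
  Fin.snoc α 1

/-- The vector `(p,q) ∈ ℝ^{n+2}` with first `n+1` coordinates `p` and last coordinate `q`. -/
noncomputable def vecPQ (n : ℕ) (p : Fin (n + 1) → ℤ) (q : ℕ) : Fin (n + 2) → ℝ :=
  Fin.snoc (fun i => (p i : ℝ)) (q : ℝ)

/-- `g` preserves the subspace `ℝ^{n+1} × {0}`. -/
def preservesHyperplane (n : ℕ) (g : Matrix (Fin (n + 2)) (Fin (n + 2)) ℝ) : Prop :=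
  ∀ x : Fin (n + 2) → ℝ, x (Fin.last (n + 1)) = 0 → g.mulVec x (Fin.last (n + 1)) = 0

/-- `ω(Λ)`: the infimum of the (sup) norms of the nonzero vectors of `Λ`. -/
noncomputable def omegaMin (n : ℕ) (Λ : Set (Fin (n + 2) → ℝ)) : ℝ :=
  sInf ((fun v => ‖v‖) '' {v | v ∈ Λ ∧ v ≠ 0})

/-- The lattice `g Λ₀`. -/
noncomputable def latticeOf (n : ℕ) (g : Matrix (Fin (n + 2)) (Fin (n + 2)) ℝ) :
    Set (Fin (n + 2) → ℝ) :=
  (fun v => g.mulVec v) '' Lambda0 n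

lemma zero_ne_last (n : ℕ) : (0 : Fin (n+2)) ≠ Fin.last (n+1) := by
  simp [Fin.ext_iff]

lemma gFlow_mulVec_zero (n : ℕ) (t : ℝ) (y : Fin (n+2) → ℝ) :
    (gFlow n t).mulVec y 0 = Real.cosh t * y 0 - Real.sinh t * y (Fin.last (n+1)) := by
  have h0l := zero_ne_last n
  have h : ∀ j : Fin (n+2), gFlow n t 0 j * y j =
      (if j = 0 then Real.cosh t * y 0 else 0) +
      (if j = Fin.last (n+1) then -(Real.sinh t * y (Fin.last (n+1))) else 0) := by
    intro j
    by_cases hj0 : j = 0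
    · subst hj0; simp [gFlow, h0l]
    · by_cases hjl : j = Fin.last (n+1)
      · subst hjl; simp [gFlow, h0l, Ne.symm h0l]
      · simp [gFlow, hj0, hjl, h0l]
        intro hh; exact absurd hh.symm hj0
  simp only [Matrix.mulVec, dotProduct, h, Finset.sum_add_distrib,
    Finset.sum_ite_eq', Finset.mem_univ, if_true]
  ring

lemma gFlow_mulVec_last (n : ℕ) (t : ℝ) (y : Fin (n+2) → ℝ) :
    (gFlow n t).mulVec y (Fin.last (n+1)) =
      -(Real.sinh t * y 0) + Real.cosh t * y (Fin.last (n+1)) := by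
  have h0l := zero_ne_last n
  have h : ∀ j : Fin (n+2), gFlow n t (Fin.last (n+1)) j * y j =
      (if j = 0 then -(Real.sinh t * y 0) else 0) +
      (if j = Fin.last (n+1) then Real.cosh t * y (Fin.last (n+1)) else 0) := by
    intro j
    by_cases hj0 : j = 0
    · subst hj0; simp [gFlow, h0l, Ne.symm h0l]
    · by_cases hjl : j = Fin.last (n+1)
      · subst hjl; simp [gFlow, Ne.symm h0l]
      · simp [gFlow, hj0, hjl, Ne.symm h0l]
        intro hh; exact absurd hh.symm hjl
  simp only [Matrix.mulVec, dotProduct, h, Finset.sum_add_distrib,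
    Finset.sum_ite_eq', Finset.mem_univ, if_true]

lemma gFlow_mulVec_mid (n : ℕ) (t : ℝ) (y : Fin (n+2) → ℝ) (i : Fin (n+2))
    (hi0 : i ≠ 0) (hil : i ≠ Fin.last (n+1)) :
    (gFlow n t).mulVec y i = y i := by
  have h : ∀ j : Fin (n+2), gFlow n t i j * y j = (if j = i then y i else 0) := by
    intro j
    by_cases hji : j = i
    · subst hji; simp [gFlow, hi0, hil]
    · simp [gFlow, hi0, hil, hji]
      intro hh; exact absurd hh.symm hji
  simp only [Matrix.mulVec, dotProduct, h, Finset.sum_ite_eq', Finset.mem_univ, if_true]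

set_option maxHeartbeats 1600000 in
lemma core (n : ℕ) (x₀ : ℝ) (φ ψ : ℝ → ℝ)
    (hφpos : ∀ x ∈ Set.Ici x₀, 0 < φ x)
    (hψφ : ∀ x ∈ Set.Ici x₀, ψ (φ x) = x)
    (α : Fin (n + 1) → ℝ)
    (rα : Matrix (Fin (n + 2)) (Fin (n + 2)) ℝ) (hrG : isSOQ n rα)
    (hrP : preservesHyperplane n rα) (hrα : rα.mulVec (embedS n α) = eOne n)
    (p : Fin (n + 1) → ℤ) (q : ℕ) (hq : 0 < q) (hqx : x₀ ≤ (q:ℝ))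
    (hsph : ratPt n p q ∈ unitSphere n)
    (happ : ‖α - ratPt n p q‖ < φ (q:ℝ))
    (hsmall : φ (q:ℝ) < 2 / Real.sqrt ((n:ℝ)+1)) :
    omegaMin n (latticeOf n
        (gFlow n (Real.log (2 / (Real.sqrt ((n:ℝ)+1) * φ (q:ℝ)))) * rα)) <
      2 * (Real.exp (-(Real.log (2 / (Real.sqrt ((n:ℝ)+1) * φ (q:ℝ))))) *
        ψ (2 / (Real.sqrt ((n:ℝ)+1) *
          Real.exp (Real.log (2 / (Real.sqrt ((n:ℝ)+1) * φ (q:ℝ))))))) := by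
  have h0l := zero_ne_last n
  obtain ⟨c, hcdef⟩ : ∃ c, c = Real.sqrt ((n:ℝ)+1) := ⟨_, rfl⟩
  rw [← hcdef]
  rw [← hcdef] at hsmall
  have hc0 : 0 < c := hcdef ▸ Real.sqrt_pos.mpr (by positivity)
  have hc2 : c^2 = (n:ℝ)+1 := hcdef ▸ Real.sq_sqrt (by positivity)
  have hqR : (0:ℝ) < (q:ℝ) := by exact_mod_cast hq
  have hφq : 0 < φ (q:ℝ) := hφpos _ hqx
  have harg : 0 < 2/(c*φ (q:ℝ)) := by positivity
  obtain ⟨t, htdef⟩ : ∃ t, t = Real.log (2/(c*φ (q:ℝ))) := ⟨_, rfl⟩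
  rw [← htdef]
  have het : Real.exp t = 2/(c*φ (q:ℝ)) := htdef ▸ Real.exp_log harg
  have ht0 : 0 ≤ t := by
    rw [htdef]
    apply Real.log_nonneg
    rw [le_div_iff₀ (by positivity)]
    have h6 := (lt_div_iff₀ hc0).mp hsmall
    nlinarith [h6]
  have hetinv : Real.exp (-t) = c*φ (q:ℝ)/2 := by
    rw [Real.exp_neg, het]
    field_simp
  obtain ⟨B, hBdef⟩ : ∃ B : ℝ, B = c*((q:ℝ)*φ (q:ℝ)) := ⟨_, rfl⟩
  have hB : 0 < B := by rw [hBdef]; positivity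
  -- RHS equals B
  have hfq : 2 / (c * Real.exp t) = φ (q:ℝ) := by
    rw [het]; field_simp
  have hRHS : 2 * (Real.exp (-t) * ψ (2 / (c * Real.exp t))) = B := by
    rw [hfq, hψφ _ hqx, hetinv, hBdef]; ring
  -- vectors
  obtain ⟨v, hvdef⟩ : ∃ v, v = vecPQ n p q := ⟨_, rfl⟩
  obtain ⟨u, hudef⟩ : ∃ u : Fin (n+2) → ℝ, u = fun i => v i - (q:ℝ) * embedS n α i := ⟨_, rfl⟩
  have hu_last : u (Fin.last (n+1)) = 0 := by
    simp [hudef, hvdef, vecPQ, embedS, Fin.snoc_last]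
  have hu_cast : ∀ i : Fin (n+1), u i.castSucc = (p i:ℝ) - (q:ℝ) * α i := by
    intro i; simp [hudef, hvdef, vecPQ, embedS, Fin.snoc_castSucc]
  obtain ⟨z, hzdef⟩ : ∃ z, z = rα.mulVec u := ⟨_, rfl⟩
  obtain ⟨w, hwdef⟩ : ∃ w, w = rα.mulVec v := ⟨_, rfl⟩
  have hw : ∀ i, w i = (q:ℝ) * eOne n i + z i := by
    intro i
    have hv : v = (q:ℝ) • embedS n α + u := by
      funext j; simp [hudef, Pi.add_apply, Pi.smul_apply, smul_eq_mul]
    rw [hwdef, hv, Matrix.mulVec_add, Matrix.mulVec_smul, hrα, hzdef]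
    simp [Pi.add_apply, Pi.smul_apply, smul_eq_mul]
  have hz_last : z (Fin.last (n+1)) = 0 := hzdef ▸ hrP u hu_last
  have hw0 : w 0 = (q:ℝ) + z 0 := by rw [hw]; simp [eOne, h0l]
  have hwlast : w (Fin.last (n+1)) = (q:ℝ) := by
    rw [hw]; simp [eOne, Ne.symm h0l, hz_last]
  have hwmid : ∀ i : Fin (n+2), i ≠ 0 → i ≠ Fin.last (n+1) → w i = z i := by
    intro i hi0 hil; rw [hw]; simp [eOne, hi0, hil]
  -- the quantity E
  obtain ⟨E, hEdef⟩ : ∃ E, E = ∑ i : Fin (n+1), (z i.castSucc)^2 := ⟨_, rfl⟩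
  have hE0 : 0 ≤ E := hEdef ▸ Finset.sum_nonneg fun i _ => sq_nonneg _
  have hEQ : E = Qform n u := by
    have h1 : Qform n z = Qform n u := hzdef ▸ hrG.2 u
    rw [← h1, Qform, hz_last, hEdef]
    ring
  have hterm : ∀ i : Fin (n+1), ((p i:ℝ) - (q:ℝ)*α i)^2 < ((q:ℝ)*φ (q:ℝ))^2 := by
    intro i
    have h1 : |α i - (p i:ℝ)/(q:ℝ)| < φ (q:ℝ) := by
      have h2 : |(α - ratPt n p q) i| ≤ ‖α - ratPt n p q‖ := by
        simpa using norm_le_pi_norm (α - ratPt n p q) i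
      have h3 : (α - ratPt n p q) i = α i - (p i:ℝ)/(q:ℝ) := by simp [ratPt]
      rw [h3] at h2; linarith
    have h4 : ((p i:ℝ) - (q:ℝ)*α i)^2 = (q:ℝ)^2 * (α i - (p i:ℝ)/(q:ℝ))^2 := by
      field_simp; ring
    have h5 : (α i - (p i:ℝ)/(q:ℝ))^2 < (φ (q:ℝ))^2 := by
      have := abs_lt.mp h1
      nlinarith [this.1, this.2]
    rw [h4, mul_pow]
    exact mul_lt_mul_of_pos_left h5 (by positivity)
  have hElt : E < B^2 := by
    have h1 : E = ∑ i : Fin (n+1), ((p i:ℝ) - (q:ℝ)*α i)^2 := by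
      rw [hEQ, Qform, hu_last]
      simp [hu_cast]
    have h2 : ∑ i : Fin (n+1), ((p i:ℝ) - (q:ℝ)*α i)^2 <
        ∑ _i : Fin (n+1), ((q:ℝ)*φ (q:ℝ))^2 :=
      Finset.sum_lt_sum_of_nonempty Finset.univ_nonempty fun i _ => hterm i
    have h3 : ∑ _i : Fin (n+1), ((q:ℝ)*φ (q:ℝ))^2 = ((n:ℝ)+1) * ((q:ℝ)*φ (q:ℝ))^2 := by
      simp [Finset.sum_const, Finset.card_univ]
    have h4 : B^2 = ((n:ℝ)+1) * ((q:ℝ)*φ (q:ℝ))^2 := by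
      rw [hBdef, mul_pow, hc2]
    rw [h1, h4]; rw [h3] at h2; exact h2
  have hzsq : ∀ j : Fin (n+1), (z j.castSucc)^2 ≤ E := by
    intro j
    rw [hEdef]
    exact Finset.single_le_sum (f := fun i : Fin (n+1) => (z i.castSucc)^2)
      (fun i _ => sq_nonneg _) (Finset.mem_univ j)
  -- Q(v) = 0 and the value of z 0
  have hpsum : ∑ i : Fin (n+1), ((p i:ℝ))^2 = ((q:ℝ))^2 := by
    have h : ∑ i : Fin (n+1), ((p i:ℝ)^2 / (q:ℝ)^2) = 1 := by
      simpa [unitSphere, ratPt, div_pow] using hsph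
    rw [← Finset.sum_div, div_eq_one_iff_eq (by positivity)] at h
    exact h
  have hQv : Qform n v = 0 := by
    rw [Qform]
    have h1 : ∀ i : Fin (n+1), v i.castSucc = (p i : ℝ) := by
      intro i; simp [hvdef, vecPQ, Fin.snoc_castSucc]
    have h2 : v (Fin.last (n+1)) = (q:ℝ) := by simp [hvdef, vecPQ, Fin.snoc_last]
    simp only [h1, h2]
    rw [hpsum]; ring
  have hQw : Qform n w = 0 := by rw [hwdef, hrG.2 v, hQv]
  have hz0E : 2*(q:ℝ)*z 0 + E = 0 := by
    have hwc : ∀ i : Fin (n+1), (w i.castSucc)^2 =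
        (z i.castSucc)^2 + (if i = 0 then 2*(q:ℝ)*z 0 + (q:ℝ)^2 else 0) := by
      intro i
      by_cases hi : i = 0
      · subst hi
        rw [Fin.castSucc_zero, hw0]
        simp; ring
      · have h1 : i.castSucc ≠ 0 := by
          rw [Ne, Fin.castSucc_eq_zero_iff]; exact hi
        have h2 : i.castSucc ≠ Fin.last (n+1) := (Fin.castSucc_lt_last i).ne
        rw [hwmid _ h1 h2]; simp [hi]
    have hsum : ∑ i : Fin (n+1), (w i.castSucc)^2 = E + (2*(q:ℝ)*z 0 + (q:ℝ)^2) := by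
      rw [hEdef]
      simp only [hwc, Finset.sum_add_distrib, Finset.sum_ite_eq', Finset.mem_univ, if_true]
    have hQw2 : Qform n w = E + 2*(q:ℝ)*z 0 := by
      rw [Qform, hsum, hwlast]; ring
    rw [hQw2] at hQw; linarith
  have hz0v : z 0 = -(E/(2*(q:ℝ))) := by
    field_simp
    linarith [hz0E]
  have hz0np : z 0 ≤ 0 := by
    rw [hz0v]
    have : 0 ≤ E/(2*(q:ℝ)) := by positivity
    linarith
  have habsz0 : |z 0| = E/(2*(q:ℝ)) := by
    rw [hz0v, abs_neg, abs_of_nonneg (by positivity)]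
  have habs : Real.exp t * |z 0| < B := by
    have hkey : Real.exp t * (B^2/(2*(q:ℝ))) = B := by
      rw [het, hBdef]
      field_simp
    have h1 : Real.exp t * |z 0| < Real.exp t * (B^2/(2*(q:ℝ))) := by
      rw [habsz0]
      exact mul_lt_mul_of_pos_left
        ((div_lt_div_iff_of_pos_right (by positivity)).mpr hElt) (Real.exp_pos t)
    linarith [hkey ▸ h1]
  -- the vector w'
  obtain ⟨w', hw'def⟩ : ∃ w', w' = (gFlow n t).mulVec w := ⟨_, rfl⟩
  have hw'0 : w' 0 = B/2 + Real.cosh t * z 0 := by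
    rw [hw'def, gFlow_mulVec_zero, hw0, hwlast]
    have h : Real.cosh t * ((q:ℝ) + z 0) - Real.sinh t * (q:ℝ)
        = (q:ℝ)*(Real.cosh t - Real.sinh t) + Real.cosh t * z 0 := by ring
    rw [h, Real.cosh_sub_sinh, hetinv, hBdef]; ring
  have hw'last : w' (Fin.last (n+1)) = B/2 - Real.sinh t * z 0 := by
    rw [hw'def, gFlow_mulVec_last, hw0, hwlast]
    have h : -(Real.sinh t * ((q:ℝ) + z 0)) + Real.cosh t * (q:ℝ)
        = (q:ℝ)*(Real.cosh t - Real.sinh t) - Real.sinh t * z 0 := by ring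
    rw [h, Real.cosh_sub_sinh, hetinv, hBdef]; ring
  have hw'mid : ∀ i : Fin (n+2), i ≠ 0 → i ≠ Fin.last (n+1) → w' i = z i := by
    intro i hi0 hil
    rw [hw'def, gFlow_mulVec_mid n t w i hi0 hil, hwmid i hi0 hil]
  -- hyperbolic bounds
  have hcosh_pos : 0 < Real.cosh t := Real.cosh_pos t
  have hcosh_le : Real.cosh t ≤ Real.exp t := by
    rw [Real.cosh_eq]
    have h1 : Real.exp (-t) ≤ Real.exp t := Real.exp_le_exp.2 (by linarith)
    linarith
  have hsinh_nonneg : 0 ≤ Real.sinh t := by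
    rw [Real.sinh_eq]
    have h1 : Real.exp (-t) ≤ Real.exp t := Real.exp_le_exp.2 (by linarith)
    linarith
  have hsinh_le : Real.sinh t ≤ Real.exp t / 2 := by
    rw [Real.sinh_eq]
    have := Real.exp_pos (-t)
    linarith
  -- norm bound
  have hnorm : ‖w'‖ < B := by
    rw [pi_norm_lt_iff hB]
    intro i
    rw [Real.norm_eq_abs]
    by_cases hi0 : i = 0
    · subst hi0
      rw [hw'0, abs_lt]
      have hub : Real.cosh t * z 0 ≤ 0 := mul_nonpos_of_nonneg_of_nonpos hcosh_pos.le hz0np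
      have hlb : -(Real.exp t * |z 0|) ≤ Real.cosh t * z 0 := by
        have h1 : |Real.cosh t * z 0| ≤ Real.exp t * |z 0| := by
          rw [abs_mul, abs_of_pos hcosh_pos]
          exact mul_le_mul_of_nonneg_right hcosh_le (abs_nonneg _)
        linarith [neg_abs_le (Real.cosh t * z 0)]
      constructor <;> linarith
    · by_cases hil : i = Fin.last (n+1)
      · subst hil
        rw [hw'last, abs_lt]
        have h1 : |Real.sinh t * z 0| ≤ Real.exp t / 2 * |z 0| := by
          rw [abs_mul, abs_of_nonneg hsinh_nonneg]
          exact mul_le_mul_of_nonneg_right hsinh_le (abs_nonneg _)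
        have h2 : Real.exp t / 2 * |z 0| < B / 2 := by
          have h3 : 0 ≤ |z 0| := abs_nonneg _
          nlinarith [habs]
        have h4 := neg_abs_le (Real.sinh t * z 0)
        have h5 := le_abs_self (Real.sinh t * z 0)
        constructor <;> linarith
      · rw [hw'mid i hi0 hil]
        obtain ⟨j, rfl⟩ := Fin.exists_castSucc_eq.mpr hil
        have h1 : (z j.castSucc)^2 < B^2 := lt_of_le_of_lt (hzsq j) hElt
        have h2 : |z j.castSucc|^2 < B^2 := by rwa [sq_abs]
        exact lt_of_pow_lt_pow_left₀ 2 hB.le h2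
  -- membership and nonzero
  have hvmem : v ∈ Lambda0 n := by
    constructor
    · intro i
      refine Fin.lastCases ?_ ?_ i
      · exact ⟨(q:ℤ), by simp [hvdef, vecPQ, Fin.snoc_last]⟩
      · intro j; exact ⟨p j, by simp [hvdef, vecPQ, Fin.snoc_castSucc]⟩
    · exact hQv
  have hw'mem : w' ∈ latticeOf n (gFlow n t * rα) :=
    ⟨v, hvmem, by show (gFlow n t * rα).mulVec v = w'; rw [← Matrix.mulVec_mulVec, ← hwdef, ← hw'def]⟩
  have hw'ne : w' ≠ 0 := by
    intro h
    have h1 := congrFun h (Fin.last (n+1))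
    rw [hw'last] at h1
    have h2 : Real.sinh t * z 0 ≤ 0 := mul_nonpos_of_nonneg_of_nonpos hsinh_nonneg hz0np
    have h3 : (0 : Fin (n+2) → ℝ) (Fin.last (n+1)) = 0 := rfl
    rw [h3] at h1
    linarith
  -- conclusion
  have hbdd : BddBelow ((fun v => ‖v‖) '' {v | v ∈ latticeOf n (gFlow n t * rα) ∧ v ≠ 0}) := by
    refine ⟨0, ?_⟩
    rintro x ⟨y, _, rfl⟩
    exact norm_nonneg y
  have hle : omegaMin n (latticeOf n (gFlow n t * rα)) ≤ ‖w'‖ :=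
    csInf_le hbdd ⟨w', ⟨hw'mem, hw'ne⟩, rfl⟩
  calc omegaMin n (latticeOf n (gFlow n t * rα)) ≤ ‖w'‖ := hle
    _ < B := hnorm
    _ = 2 * (Real.exp (-t) * ψ (2 / (c * Real.exp t))) := hRHS.symm

/-- One direction of the correspondence (Theorem `dictionary`): if `α ∈ Sⁿ` is
`φ`-approximable in `Sⁿ` (with denominators `q ≥ x₀`), then there is a sequence
`t_k → ∞` in `[t₀,∞)` with `ω(g_{t_k} r_α Λ₀) < 2ρ(t_k)`, where
`t₀ = ln(2/(√(n+1)φ(x₀)))` and `ρ(t) = e^{−t} φ⁻¹(2/(√(n+1)e^t))`. -/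
theorem approximable_implies_small_lattice_vectors (n : ℕ) (hn : 1 ≤ n)
    (x₀ : ℝ) (hx₀ : 1 ≤ x₀) (φ ψ : ℝ → ℝ)
    (hφpos : ∀ x ∈ Set.Ici x₀, 0 < φ x)
    (hφanti : StrictAntiOn φ (Set.Ici x₀))
    (hφcont : ContinuousOn φ (Set.Ici x₀))
    (hφlim : Filter.Tendsto φ Filter.atTop (nhds 0))
    (hxφ : ∀ x y : ℝ, x₀ ≤ x → x ≤ y → y * φ y ≤ x * φ x)
    -- `ψ = φ⁻¹` is the inverse function of `φ`, defined on `(0, φ(x₀)]`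
    (hψmem : ∀ y ∈ Set.Ioc (0 : ℝ) (φ x₀), ψ y ∈ Set.Ici x₀ ∧ φ (ψ y) = y)
    (hψφ : ∀ x ∈ Set.Ici x₀, ψ (φ x) = x)
    (α : Fin (n + 1) → ℝ) (hα : α ∈ unitSphere n)
    (rα : Matrix (Fin (n + 2)) (Fin (n + 2)) ℝ) (hrG : isSOQ n rα)
    (hrP : preservesHyperplane n rα) (hrα : rα.mulVec (embedS n α) = eOne n)
    (happrox : {pq : (Fin (n + 1) → ℤ) × ℕ | 0 < pq.2 ∧ x₀ ≤ (pq.2 : ℝ) ∧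
      ratPt n pq.1 pq.2 ∈ unitSphere n ∧
      ‖α - ratPt n pq.1 pq.2‖ < φ (pq.2 : ℝ)}.Infinite) :
    ∃ ts : ℕ → ℝ,
      (∀ k, Real.log (2 / (Real.sqrt ((n : ℝ) + 1) * φ x₀)) ≤ ts k) ∧
      Filter.Tendsto ts Filter.atTop Filter.atTop ∧
      ∀ k, omegaMin n (latticeOf n (gFlow n (ts k) * rα)) <
        2 * (Real.exp (-(ts k)) *
          ψ (2 / (Real.sqrt ((n : ℝ) + 1) * Real.exp (ts k)))) := by
  set S := {pq : (Fin (n + 1) → ℤ) × ℕ | 0 < pq.2 ∧ x₀ ≤ (pq.2 : ℝ) ∧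
      ratPt n pq.1 pq.2 ∈ unitSphere n ∧
      ‖α - ratPt n pq.1 pq.2‖ < φ (pq.2 : ℝ)} with hSdef
  have hc0 : (0:ℝ) < Real.sqrt ((n:ℝ)+1) := Real.sqrt_pos.mpr (by positivity)
  have h2c : (0:ℝ) < 2 / Real.sqrt ((n:ℝ)+1) := by positivity
  -- unboundedness of denominators
  have hbig : ∀ N : ℕ, ∃ pq, pq ∈ S ∧ N < pq.2 := by
    intro N
    by_contra hcon
    push_neg at hcon
    apply happrox
    have hsub : S ⊆ (Set.pi Set.univ (fun _ : Fin (n+1) => Set.Icc (-(N:ℤ)) (N:ℤ))) ×ˢ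
        (Set.Iic N) := by
      rintro ⟨p, q⟩ hpq
      have hqN : q ≤ N := hcon _ hpq
      obtain ⟨hq, hqx, hsph, -⟩ := hpq
      constructor
      · intro i _
        have h1 : ((p i : ℝ)/(q:ℝ))^2 ≤ 1 := by
          rw [show (1:ℝ) = ∑ j, (ratPt n p q j)^2 from hsph.symm]
          exact Finset.single_le_sum (f := fun j => (ratPt n p q j)^2)
            (fun j _ => sq_nonneg _) (Finset.mem_univ i)
        have hqR : (0:ℝ) < (q:ℝ) := by exact_mod_cast hq
        have h2 : ((p i:ℝ))^2 ≤ ((q:ℝ))^2 := by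
          rw [div_pow] at h1
          calc ((p i:ℝ))^2 = ((p i:ℝ)^2/(q:ℝ)^2) * (q:ℝ)^2 := by field_simp
          _ ≤ 1 * (q:ℝ)^2 := mul_le_mul_of_nonneg_right h1 (by positivity)
          _ = (q:ℝ)^2 := by ring
        have hqN' : (q:ℝ) ≤ (N:ℝ) := by exact_mod_cast hqN
        have h3 : ((p i:ℝ))^2 ≤ ((N:ℝ))^2 := by nlinarith
        have hN0 : (0:ℝ) ≤ (N:ℝ) := by positivity
        constructor
        · have : -(N:ℝ) ≤ (p i:ℝ) := by nlinarith
          exact_mod_cast this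
        · have : (p i:ℝ) ≤ (N:ℝ) := by nlinarith
          exact_mod_cast this
      · exact hqN
    exact Set.Finite.subset
      ((Set.Finite.pi (fun i => Set.finite_Icc _ _)).prod (Set.finite_Iic N)) hsub
  -- threshold for smallness of φ
  obtain ⟨M, hM⟩ : ∃ M : ℝ, ∀ x ≥ M, φ x < 2 / Real.sqrt ((n:ℝ)+1) := by
    have hev : ∀ᶠ x in Filter.atTop, φ x < 2 / Real.sqrt ((n:ℝ)+1) :=
      hφlim.eventually (Filter.eventually_iff_exists_mem.mpr
        ⟨Set.Iio _, Iio_mem_nhds h2c, fun y hy => hy⟩)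
    exact Filter.eventually_atTop.mp hev
  -- choose pairs
  have hsel : ∀ k : ℕ, ∃ pq, pq ∈ S ∧ (max k ⌈M⌉₊) < pq.2 := fun k => hbig _
  choose f hfS hfgt using hsel
  refine ⟨fun k => Real.log (2 / (Real.sqrt ((n:ℝ)+1) * φ (((f k).2 : ℕ) : ℝ))), ?_, ?_, ?_⟩
  · -- lower bound t₀ ≤ ts k
    intro k
    obtain ⟨hq, hqx, hsph, happ⟩ := hfS k
    have hφx₀ : 0 < φ x₀ := hφpos x₀ Set.self_mem_Ici
    have hφq : 0 < φ (((f k).2 : ℕ) : ℝ) := hφpos _ hqx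
    apply Real.log_le_log (by positivity)
    gcongr
    exact hφanti.antitoneOn Set.self_mem_Ici hqx hqx
  · -- tendsto
    have hqk : ∀ k : ℕ, (k:ℝ) ≤ (((f k).2 : ℕ) : ℝ) := by
      intro k
      have h1 : k ≤ (f k).2 := le_of_lt (lt_of_le_of_lt (le_max_left _ _) (hfgt k))
      exact_mod_cast h1
    have hqtend : Filter.Tendsto (fun k => (((f k).2 : ℕ) : ℝ)) Filter.atTop Filter.atTop :=
      Filter.tendsto_atTop_mono hqk tendsto_natCast_atTop_atTop
    have hφtend : Filter.Tendsto (fun k => φ (((f k).2 : ℕ) : ℝ)) Filter.atTop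
        (nhdsWithin 0 (Set.Ioi 0)) := by
      apply tendsto_nhdsWithin_of_tendsto_nhds_of_eventually_within _ (hφlim.comp hqtend)
      exact Filter.Eventually.of_forall fun k => Set.mem_Ioi.mpr (hφpos _ (hfS k).2.1)
    have hinv : Filter.Tendsto (fun k => (φ (((f k).2 : ℕ) : ℝ))⁻¹) Filter.atTop
        Filter.atTop := tendsto_inv_nhdsGT_zero.comp hφtend
    have hmul : Filter.Tendsto
        (fun k => (2 / Real.sqrt ((n:ℝ)+1)) * (φ (((f k).2 : ℕ) : ℝ))⁻¹)
        Filter.atTop Filter.atTop := Filter.Tendsto.const_mul_atTop h2c hinv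
    have hcongr : (fun k => 2 / (Real.sqrt ((n:ℝ)+1) * φ (((f k).2 : ℕ) : ℝ)))
        = fun k => (2 / Real.sqrt ((n:ℝ)+1)) * (φ (((f k).2 : ℕ) : ℝ))⁻¹ := by
      funext k
      rw [← div_eq_mul_inv, div_div]
    exact Real.tendsto_log_atTop.comp (hcongr ▸ hmul)
  · -- main bound
    intro k
    obtain ⟨hq, hqx, hsph, happ⟩ := hfS k
    have hMle : M ≤ (((f k).2 : ℕ) : ℝ) := by
      have h1 : ⌈M⌉₊ ≤ (f k).2 := le_of_lt (lt_of_le_of_lt (le_max_right _ _) (hfgt k))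
      have h2 : ((⌈M⌉₊ : ℕ) : ℝ) ≤ (((f k).2 : ℕ) : ℝ) := by exact_mod_cast h1
      exact le_trans (Nat.le_ceil M) h2
    exact core n x₀ φ ψ hφpos hψφ α rα hrG hrP hrα (f k).1 (f k).2 hq hqx hsph happ
      (hM _ hMle)
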